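/- arXiv:2204.02395 — 3 statements merged into one kernel-verified Lean document; each statement's English description precedes it below -/
import Mathlib

section
/- Let f : ℝⁿ → ℝⁿ, V : ℝⁿ → ℝ, c ∈ ℝ, ε > 0, δ > 0, and set K := {x ∈ ℝⁿ : V(x) ≤ c}. Assume V(x) ≥ 0 for all x ∈ K, and V(f(x)) ≤ V(x) − δ for every x ∈ K with ‖x‖_∞ ≥ ε. Then for every x₀ ∈ K there exists k ≤ ⌊c/δ⌋ + 1 such that the iterate x_k of the trajectory x_{j+1} = f(x_j) satisfies ‖x_k‖_∞ < ε. -/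
/-- Quantitative finite-time reaching bound underlying Theorem 3 of the paper:
with a nonnegative Lyapunov function and a uniform decrement `δ` outside the
sup-norm ball of radius `ε`, any trajectory of `x_{j+1} = f x_j` starting in
the sublevel set `{V ≤ c}` enters the ball within at most `⌊c/δ⌋ + 1` steps.
The state space `Fin n → ℝ` carries the sup norm. -/
theorem finite_time_reaching {n : ℕ}
    (f : (Fin n → ℝ) → (Fin n → ℝ)) (V : (Fin n → ℝ) → ℝ)
    (c ε δ : ℝ) (hε : 0 < ε) (hδ : 0 < δ)
    (hVpos : ∀ x : Fin n → ℝ, V x ≤ c → 0 ≤ V x)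
    (hdec : ∀ x : Fin n → ℝ, V x ≤ c → ε ≤ ‖x‖ → V (f x) ≤ V x - δ) :
    ∀ x₀ : Fin n → ℝ, V x₀ ≤ c →
      ∃ k ≤ Nat.floor (c / δ) + 1, ‖f^[k] x₀‖ < ε := by
  intro x₀ hx₀
  by_contra h
  push_neg at h
  set N := Nat.floor (c / δ) + 1 with hN
  have key : ∀ k ≤ N, V (f^[k] x₀) ≤ c - k * δ := by
    intro k
    induction k with
    | zero => intro _; simpa using hx₀
    | succ k ih =>
      intro hk
      have hk' : k ≤ N := Nat.le_of_succ_le hk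
      have h1 : V (f^[k] x₀) ≤ c - k * δ := ih hk'
      have h2 : V (f^[k] x₀) ≤ c := by
        have : (0:ℝ) ≤ k * δ := by positivity
        linarith
      have h3 : ε ≤ ‖f^[k] x₀‖ := h k hk'
      have := hdec _ h2 h3
      rw [Function.iterate_succ_apply']
      push_cast
      linarith
  have hVN := key N le_rfl
  have hVN' : V (f^[N] x₀) ≤ c := by
    have : (0:ℝ) ≤ N * δ := by positivity
    linarith
  have h0 : (0:ℝ) ≤ V (f^[N] x₀) := hVpos _ hVN'
  have hNle : (N:ℝ) ≤ c / δ := by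
    rw [le_div_iff₀ hδ]; linarith
  have : N ≤ Nat.floor (c / δ) := Nat.le_floor hNle
  omega
end

section
/- Let f : ℝⁿ → ℝⁿ and V : ℝⁿ → ℝ be continuous, let D̄ ⊆ ℝⁿ, c ∈ ℝ, ε > 0, and suppose: K := {x ∈ ℝⁿ : V(x) ≤ c} is compact and K ⊆ D̄; V(0) = 0 and V(x) > 0 for all x ∈ D̄ ∖ {0}; and V(f(x)) < V(x) for every x ∈ D̄ with ‖x‖_∞ ≥ ε. Then for every x₀ ∈ K, the trajectory x_{j+1} = f(x_j) reaches the set B_ε = {x ∈ ℝⁿ : ‖x‖_∞ < ε} in finitely many steps; i.e., the sublevel set K is contained in the set of initial states from which the trajectory enters B_ε in finite time. -/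
/-- Theorem 3 of the paper: the sublevel set `K = {V ≤ c}` of the verified
Lyapunov function contained in the region of interest `D̄` is a verified
under-approximation of the region of attraction of the sup-norm ball
`B_ε = {x : ‖x‖_∞ < ε}`: from every initial state in `K`, the trajectory of
`x_{j+1} = f x_j` reaches `B_ε` in finitely many steps.
The state space `Fin n → ℝ` carries the sup norm. -/
theorem sublevel_subset_ROA {n : ℕ}
    (f : (Fin n → ℝ) → (Fin n → ℝ)) (V : (Fin n → ℝ) → ℝ)
    (hf : Continuous f) (hV : Continuous V)
    (Dbar : Set (Fin n → ℝ)) (c ε : ℝ) (hε : 0 < ε)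
    (hKcpt : IsCompact {x : Fin n → ℝ | V x ≤ c})
    (hKD : {x : Fin n → ℝ | V x ≤ c} ⊆ Dbar)
    (hV0 : V 0 = 0) (hVpos : ∀ x ∈ Dbar, x ≠ 0 → 0 < V x)
    (hdec : ∀ x ∈ Dbar, ε ≤ ‖x‖ → V (f x) < V x) :
    ∀ x₀ : Fin n → ℝ, V x₀ ≤ c → ∃ k : ℕ, ‖f^[k] x₀‖ < ε := by
  intro x₀ hx₀
  by_contra h
  push_neg at h
  -- every iterate stays in the sublevel set K
  have htraj : ∀ k : ℕ, V (f^[k] x₀) ≤ c := by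
    intro k
    induction k with
    | zero => simpa using hx₀
    | succ k ih =>
      rw [Function.iterate_succ_apply']
      exact le_of_lt (lt_of_lt_of_le (hdec _ (hKD ih) (h k)) ih)
  have hne : (f^[0] x₀) ∈ ({x : Fin n → ℝ | V x ≤ c} ∩ {x | ε ≤ ‖x‖}) :=
    ⟨htraj 0, h 0⟩
  have hScl : IsClosed {x : Fin n → ℝ | ε ≤ ‖x‖} :=
    isClosed_le continuous_const continuous_norm
  have hScpt : IsCompact ({x : Fin n → ℝ | V x ≤ c} ∩ {x | ε ≤ ‖x‖}) :=
    hKcpt.inter_right hScl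
  obtain ⟨z, hz, hzmin⟩ := hScpt.exists_isMinOn ⟨_, hne⟩
    ((hV.sub (hV.comp hf)).continuousOn)
  set δ : ℝ := V z - V (f z) with hδdef
  have hδpos : 0 < δ := sub_pos.2 (hdec z (hKD hz.1) hz.2)
  -- each step decreases V by at least δ
  have hdecδ : ∀ k : ℕ, V (f^[k] x₀) ≤ V x₀ - k * δ := by
    intro k
    induction k with
    | zero => simp
    | succ k ih =>
      rw [Function.iterate_succ_apply']
      have hmem : (f^[k] x₀) ∈ ({x : Fin n → ℝ | V x ≤ c} ∩ {x | ε ≤ ‖x‖}) :=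
        ⟨htraj k, h k⟩
      have hstep : δ ≤ V (f^[k] x₀) - V (f (f^[k] x₀)) := hzmin hmem
      push_cast
      linarith
  obtain ⟨k, hk⟩ := exists_nat_gt (V x₀ / δ)
  have hklt : V x₀ < k * δ := (div_lt_iff₀ hδpos).1 hk
  have hpos : 0 < V (f^[k] x₀) := by
    apply hVpos _ (hKD (htraj k))
    intro h0
    have := h k
    rw [h0] at this
    simp at this
    linarith
  have := hdecδ k
  linarith
end

section
/- Let f : ℝⁿ → ℝⁿ and V : ℝⁿ → ℝ be continuous, let D̄ ⊆ ℝⁿ, c ∈ ℝ, ε > 0, and suppose: K := {x ∈ ℝⁿ : V(x) ≤ c} is compact and K ⊆ D̄; V(f(x)) < V(x) for every x ∈ D̄ with ‖x‖_∞ ≥ ε; and additionally f(x) ∈ K for every x ∈ K with ‖x‖_∞ < ε. Then for every x₀ ∈ K the trajectory x_{j+1} = f(x_j) remains in K for all time and visits the set B_ε = {x ∈ ℝⁿ : ‖x‖_∞ < ε} infinitely often (for every N ∈ ℕ there exists k ≥ N with ‖x_k‖_∞ < ε). -/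
/-- Asymptotic-stability-of-`B_ε` conclusion of Theorem 3 of the paper, made
precise: if moreover `f` maps the part of the sublevel set `K = {V ≤ c}` inside
the sup-norm ball `B_ε` back into `K`, then every trajectory of
`x_{j+1} = f x_j` starting in `K` remains in `K` for all time and visits `B_ε`
infinitely often. The state space `Fin n → ℝ` carries the sup norm. -/
theorem invariance_and_recurrence {n : ℕ}
    (f : (Fin n → ℝ) → (Fin n → ℝ)) (V : (Fin n → ℝ) → ℝ)
    (hf : Continuous f) (hV : Continuous V)
    (Dbar : Set (Fin n → ℝ)) (c ε : ℝ) (hε : 0 < ε)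
    (hKcpt : IsCompact {x : Fin n → ℝ | V x ≤ c})
    (hKD : {x : Fin n → ℝ | V x ≤ c} ⊆ Dbar)
    (hdec : ∀ x ∈ Dbar, ε ≤ ‖x‖ → V (f x) < V x)
    (hinv : ∀ x : Fin n → ℝ, V x ≤ c → ‖x‖ < ε → V (f x) ≤ c) :
    ∀ x₀ : Fin n → ℝ, V x₀ ≤ c →
      (∀ k : ℕ, V (f^[k] x₀) ≤ c) ∧
      (∀ N : ℕ, ∃ k ≥ N, ‖f^[k] x₀‖ < ε) := by
  intro x₀ hx0
  have hK : ∀ k : ℕ, V (f^[k] x₀) ≤ c := by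
    intro k
    induction k with
    | zero => exact hx0
    | succ k ih =>
      rw [Function.iterate_succ_apply']
      by_cases h : ‖f^[k] x₀‖ < ε
      · exact hinv _ ih h
      · exact le_of_lt (lt_of_lt_of_le (hdec _ (hKD ih) (not_lt.mp h)) ih)
  refine ⟨hK, ?_⟩
  intro N
  by_contra h
  push_neg at h
  set S : Set (Fin n → ℝ) := {x | V x ≤ c} ∩ {x | ε ≤ ‖x‖} with hS
  have hScpt : IsCompact S :=
    hKcpt.inter_right (isClosed_le continuous_const continuous_norm)
  have hSne : S.Nonempty := ⟨f^[N] x₀, hK N, h N le_rfl⟩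
  obtain ⟨z, hz, hzmin⟩ := hScpt.exists_isMinOn hSne
    ((hV.sub (hV.comp hf)).continuousOn)
  set δ := V z - V (f z) with hδdef
  have hδ : 0 < δ := sub_pos.mpr (hdec z (hKD hz.1) hz.2)
  have htraj : ∀ k ≥ N, f^[k] x₀ ∈ S := fun k hk => ⟨hK k, h k hk⟩
  have key : ∀ m : ℕ, V (f^[N + m] x₀) ≤ V (f^[N] x₀) - m * δ := by
    intro m
    induction m with
    | zero => simp
    | succ m ih =>
      have hx : f^[N + m] x₀ ∈ S := htraj _ (Nat.le_add_right N m)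
      have hstep : δ ≤ V (f^[N + m] x₀) - V (f (f^[N + m] x₀)) := hzmin hx
      have : V (f (f^[N + m] x₀)) ≤ V (f^[N + m] x₀) - δ := by linarith
      have heq : V (f^[N + (m + 1)] x₀) = V (f (f^[N + m] x₀)) := by
        rw [← Nat.add_assoc, Function.iterate_succ_apply']
      rw [heq]
      push_cast
      linarith
  obtain ⟨w, hw, hwmin⟩ := hScpt.exists_isMinOn hSne hV.continuousOn
  obtain ⟨m, hm⟩ := exists_nat_gt ((V (f^[N] x₀) - V w) / δ)
  have h1 : V w ≤ V (f^[N + m] x₀) := hwmin (htraj _ (Nat.le_add_right N m))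
  have h2 := key m
  have h3 : (V (f^[N] x₀) - V w) < m * δ := by
    rw [div_lt_iff₀ hδ] at hm
    linarith
  linarith
end
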